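/- Assume: (1) M ≤ P implies M ∈ K, P ∈ K and M ⊆ P; ≤ is coherent (M₀ ⊆ M₁, M₀ ≤ P and M₁ ≤ P imply M₀ ≤ M₁); and the whole universe U is a member of K; (2) nf has left monotonicity, right monotonicity, symmetry, and strong right transitivity; (3) (closure) λ₀ is an infinite cardinal and for every P ∈ K and every B ⊆ P there exists M with B ⊆ M ≤ P and |M| ≤ |B| + λ₀; (4) (chain local character for singletons) for every infinite regular cardinal δ, every ≤-increasing chain ⟨P_j : j < δ⟩ of members of K, and every a ∈ U, there exists j < δ with nf(P_j, {a}, ⋃_{j'<δ} P_{j'}); (5) (set local character at λ₀) θ is a regular cardinal with θ > λ₀ such that for every P ∈ K and every A ⊆ U with |A| ≤ λ₀ there exists M ≤ P with |M| < θ and nf(M, A, P). Then for every cardinal α, every set A ⊆ U with |A| ≤ α, and every N ∈ K, there exists M ≤ N with |M| < max(θ, α⁺) such that A ⫫*_M {b} for every b ∈ N. -/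

import Mathlib

universe u

/-- `A ⫫*_C B`: there is a model `M₀ ∈ K` contained in `C` with `nf M₀ A B`. -/
def nfm {U : Type u} (K : Set (Set U)) (nf : Set U → Set U → Set U → Prop)
    (A C B : Set U) : Prop :=
  ∃ M₀ ∈ K, M₀ ⊆ C ∧ nf M₀ A B

/-- Cardinality bound on a union over ordinals below `o`. -/
private lemma mk_biUnion_lt_of {U : Type u} {o : Ordinal.{u}} {s : Ordinal.{u} → Set U}
    {c : Cardinal.{u}} (hc : Cardinal.aleph0 ≤ c) (hcof : o.card < c.ord.cof) (hoc : o.card < c)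
    (hs : ∀ i < o, Cardinal.mk ↥(s i) < c) :
    Cardinal.mk ↥(⋃ i, ⋃ (_ : i < o), s i) < c := by
  haveI inst : IsWellOrder o.ToType ((· < ·) : o.ToType → o.ToType → Prop) := isWellOrder_lt
  have hre : (⋃ i, ⋃ (_ : i < o), s i) =
      ⋃ x : o.ToType, s (Ordinal.typein ((· < ·) : o.ToType → o.ToType → Prop) x) := by
    ext u
    simp only [Set.mem_iUnion]
    constructor
    · rintro ⟨i, hi, hu⟩
      exact ⟨Ordinal.enum ((· < ·) : o.ToType → o.ToType → Prop)
        ⟨i, Set.mem_Iio.2 (by rw [Ordinal.type_toType]; exact hi)⟩, by convert hu using 2; exact Ordinal.typein_enum _ _⟩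
    · rintro ⟨x, hu⟩
      exact ⟨_, Ordinal.typein_lt_self x, hu⟩
  rw [hre]
  refine lt_of_le_of_lt (Cardinal.mk_iUnion_le _) (Cardinal.mul_lt_of_lt hc ?_ ?_)
  · rwa [Cardinal.mk_toType]
  · exact Ordinal.iSup_lt (by rwa [Cardinal.mk_toType])
      fun x => hs _ (Ordinal.typein_lt_self x)

/-- The main induction: over some `M ≤ N` of size `< max(θ, α⁺)`, every singleton of `N`
is `nf`-independent (over a submodel of `M`) from `A`. -/
private lemma stmt_6_main {U : Type u} (K : Set (Set U)) (nf : Set U → Set U → Set U → Prop)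
    (le : Set U → Set U → Prop)
    (hle : ∀ M P : Set U, le M P → M ∈ K ∧ P ∈ K ∧ M ⊆ P)
    (hcoh : ∀ M₀ M₁ P : Set U, M₀ ⊆ M₁ → le M₀ P → le M₁ P → le M₀ M₁)
    (huniv : (Set.univ : Set U) ∈ K)
    (hrmono : ∀ M ∈ K, ∀ A B B₀ : Set U, nf M A B → B₀ ⊆ B → nf M A B₀)
    (hsym : ∀ M ∈ K, ∀ A B : Set U, nf M A B → nf M B A)
    (htrans : ∀ M₀ ∈ K, ∀ M₁ ∈ K, ∀ A B : Set U, nf M₀ A M₁ → nf M₁ A B → nf M₀ A B)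
    (lam0 : Cardinal.{u}) (hlam0 : Cardinal.aleph0 ≤ lam0)
    (hclosure : ∀ P ∈ K, ∀ B : Set U, B ⊆ P →
      ∃ M : Set U, B ⊆ M ∧ le M P ∧ Cardinal.mk ↥M ≤ Cardinal.mk ↥B + lam0)
    (hchain : ∀ δ : Cardinal.{u}, δ.IsRegular →
      ∀ P : Ordinal.{u} → Set U, (∀ j < δ.ord, P j ∈ K) →
        (∀ i j : Ordinal.{u}, i < j → j < δ.ord → le (P i) (P j)) →
        ∀ a : U, ∃ j < δ.ord, nf (P j) {a} (⋃ j' < δ.ord, P j'))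
    (θ : Cardinal.{u}) (hθ : θ.IsRegular) (hth_lam : lam0 < θ)
    (hset : ∀ P ∈ K, ∀ A : Set U, Cardinal.mk ↥A ≤ lam0 →
      ∃ M : Set U, le M P ∧ Cardinal.mk ↥M < θ ∧ nf M A P) :
    ∀ α : Cardinal.{u}, ∀ A : Set U, Cardinal.mk ↥A ≤ α → ∀ N ∈ K,
      ∃ M : Set U, le M N ∧ Cardinal.mk ↥M < max θ (Order.succ α) ∧
        ∀ b ∈ N, ∃ M₀ ∈ K, M₀ ⊆ M ∧ nf M₀ {b} A := by
  intro α
  refine (wellFounded_lt (α := Cardinal.{u})).induction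
    (C := fun α => ∀ A : Set U, Cardinal.mk ↥A ≤ α → ∀ N ∈ K,
      ∃ M : Set U, le M N ∧ Cardinal.mk ↥M < max θ (Order.succ α) ∧
        ∀ b ∈ N, ∃ M₀ ∈ K, M₀ ⊆ M ∧ nf M₀ {b} A) α ?_
  clear α
  intro α IH A hA N hN
  by_cases hsmall : α ≤ lam0
  · -- base case: `hset` applies directly
    obtain ⟨M, hMN, hMθ, hMnf⟩ := hset N hN A (hA.trans hsmall)
    have hMK := (hle M N hMN).1
    refine ⟨M, hMN, hMθ.trans_le (le_max_left _ _), fun b hb => ⟨M, hMK, subset_rfl, ?_⟩⟩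
    exact hsym M hMK A {b} (hrmono M hMK A N {b} hMnf (Set.singleton_subset_iff.2 hb))
  · push_neg at hsmall
    have hα0 : Cardinal.aleph0 ≤ α := hlam0.trans hsmall.le
    have hordlim : Order.IsSuccLimit (α.ord) := Cardinal.isSuccLimit_ord hα0
    haveI instA : IsWellOrder (α.ord).ToType
        ((· < ·) : (α.ord).ToType → (α.ord).ToType → Prop) := isWellOrder_lt
    set δ : Cardinal.{u} := (α.ord).cof with hδ
    have hδreg : δ.IsRegular := Cardinal.isRegular_cof hordlim
    have hδα : δ ≤ α := Ordinal.cof_ord_le α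
    -- a cofinal family in `α.ord`
    obtain ⟨ι, f, hlsub, hι⟩ := Ordinal.exists_lsub_cof α.ord
    have hfα : ∀ x : ι, f x < α.ord := fun x => hlsub ▸ Ordinal.lt_lsub f x
    -- reindex `ι` by ordinals below `δ.ord`
    obtain ⟨eι⟩ : Nonempty (ι ≃ (δ.ord).ToType) :=
      Cardinal.eq.1 (by rw [hι, Cardinal.mk_toType, Cardinal.card_ord])
    obtain ⟨idx, hidx⟩ : ∃ idx : ∀ i : Ordinal.{u}, i < δ.ord → ι,
        ∀ x : ι, ∃ i, ∃ hi : i < δ.ord, idx i hi = x := by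
      refine ⟨fun i hi => eι.symm (Ordinal.ToType.mk (o := δ.ord) ⟨i, hi⟩), fun x => ?_⟩
      refine ⟨((Ordinal.ToType.mk (o := δ.ord)).symm (eι x)).1,
        ((Ordinal.ToType.mk (o := δ.ord)).symm (eι x)).2, ?_⟩
      simp
    -- rank the elements of `A` below `α.ord`
    obtain ⟨eA⟩ : Nonempty (↥A ↪ (α.ord).ToType) := by
      refine (Cardinal.le_def _ _).1 ?_
      rwa [Cardinal.mk_toType, Cardinal.card_ord]
    set rank : ↥A → Ordinal.{u} :=
      fun x => Ordinal.typein ((· < ·) : (α.ord).ToType → (α.ord).ToType → Prop) (eA x)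
      with hrank
    have hrankα : ∀ x, rank x < α.ord := fun x => Ordinal.typein_lt_self (eA x)
    set gOrd : ∀ i : Ordinal.{u}, i < δ.ord → Ordinal.{u} :=
      fun i hi => Order.succ (f (idx i hi)) with hgOrd
    have hg : ∀ i hi, gOrd i hi < α.ord := fun i hi => hordlim.succ_lt (hfα _)
    -- the pieces of `A`
    set AAU : Ordinal.{u} → Set U :=
      fun i => {u : U | ∃ hu : u ∈ A, ∃ hi : i < δ.ord, rank ⟨u, hu⟩ < gOrd i hi} with hAAU
    have hAAUsub : ∀ i, AAU i ⊆ A := fun i u hu => hu.1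
    -- every element of `A` is in some piece
    have hcover : ∀ u : ↥A, ∃ i, ∃ _ : i < δ.ord, u.1 ∈ AAU i := by
      intro u
      have h1 : rank u < Ordinal.lsub f := hlsub.symm ▸ hrankα u
      obtain ⟨x, hx⟩ := Ordinal.lt_lsub_iff.1 h1
      obtain ⟨i, hi, rfl⟩ := hidx x
      exact ⟨i, hi, u.2, hi, (Order.lt_succ_iff_of_not_isMax (not_isMax _)).2 (by
        simpa using hx)⟩
    -- size of the pieces
    have hAAUcard : ∀ i, i < δ.ord → Cardinal.mk ↥(AAU i) < α := by
      intro i hi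
      have hz : gOrd i hi < Ordinal.type ((· < ·) : (α.ord).ToType → (α.ord).ToType → Prop) := by
        rw [Ordinal.type_toType]; exact hg i hi
      set z : (α.ord).ToType :=
        Ordinal.enum ((· < ·) : (α.ord).ToType → (α.ord).ToType → Prop) ⟨gOrd i hi, hz⟩ with hzdef
      have hinj : Function.Injective (fun u : ↥(AAU i) =>
          (⟨eA ⟨u.1, u.2.choose⟩, by
            obtain ⟨hi', hlt⟩ := u.2.choose_spec
            have h2 : Ordinal.typein ((· < ·) : (α.ord).ToType → (α.ord).ToType → Prop)
                  (eA ⟨u.1, u.2.choose⟩) <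
                Ordinal.typein ((· < ·) : (α.ord).ToType → (α.ord).ToType → Prop) z := by
              rw [hzdef, Ordinal.typein_enum]
              exact hlt
            exact (Ordinal.typein_lt_typein
              ((· < ·) : (α.ord).ToType → (α.ord).ToType → Prop)).1 h2⟩ :
            {y : (α.ord).ToType // y < z})) := by
        intro u v huv
        have h3 : eA ⟨u.1, u.2.choose⟩ = eA ⟨v.1, v.2.choose⟩ := congrArg Subtype.val huv
        have h4 := congrArg Subtype.val (eA.injective h3)
        exact Subtype.ext h4
      have h5 : Cardinal.mk ↥(AAU i) ≤ Cardinal.mk {y : (α.ord).ToType // y < z} :=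
        Cardinal.mk_le_of_injective hinj
      have h6 : Cardinal.mk {y : (α.ord).ToType // y < z} = (gOrd i hi).card := by
        rw [← Ordinal.card_typein (r := ((· < ·) : (α.ord).ToType → (α.ord).ToType → Prop)) z,
          hzdef, Ordinal.typein_enum]
      rw [h6] at h5
      exact h5.trans_lt (Cardinal.lt_ord.1 (hg i hi))
    -- closure operator from `hclosure` at `univ`
    obtain ⟨cl, hcl⟩ : ∃ cl : Set U → Set U, ∀ s : Set U,
        s ⊆ cl s ∧ le (cl s) Set.univ ∧ Cardinal.mk ↥(cl s) ≤ Cardinal.mk ↥s + lam0 :=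
      ⟨fun s => (hclosure _ huniv s (Set.subset_univ s)).choose,
        fun s => (hclosure _ huniv s (Set.subset_univ s)).choose_spec⟩
    -- the chain of models
    obtain ⟨P, hPeq⟩ : ∃ P : Ordinal.{u} → Set U,
        ∀ i, P i = cl ((⋃ i', ⋃ (_ : i' < i), P i') ∪ AAU i) :=
      ⟨fun i => Ordinal.lt_wf.fix
        (fun i ih => cl ((⋃ i', ⋃ (h : i' < i), ih i' h) ∪ AAU i)) i,
        fun i => WellFounded.fix_eq _ _ _⟩
    have hPspec : ∀ i : Ordinal.{u}, ((⋃ i', ⋃ (_ : i' < i), P i') ∪ AAU i) ⊆ P i ∧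
        le (P i) Set.univ ∧
        Cardinal.mk ↥(P i) ≤ Cardinal.mk ↥((⋃ i', ⋃ (_ : i' < i), P i') ∪ AAU i) + lam0 := by
      intro i
      rw [hPeq i]
      exact hcl _
    have hPmono : ∀ i' i : Ordinal.{u}, i' < i → P i' ⊆ P i := by
      intro i' i h
      refine subset_trans ?_ (subset_trans Set.subset_union_left (hPspec i).1)
      exact subset_trans (Set.subset_iUnion (fun _ : i' < i => P i') h)
        (Set.subset_iUnion (fun j => ⋃ (_ : j < i), P j) i')
    have hPK : ∀ i, P i ∈ K := fun i => (hle _ _ (hPspec i).2.1).1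
    have hPle : ∀ i' i : Ordinal.{u}, i' < i → le (P i') (P i) :=
      fun i' i h => hcoh _ _ _ (hPmono i' i h) (hPspec i').2.1 (hPspec i).2.1
    have hAAUP : ∀ i, AAU i ⊆ P i :=
      fun i => subset_trans Set.subset_union_right (hPspec i).1
    -- sizes along the chain
    have hPcard : ∀ i : Ordinal.{u}, i < δ.ord → Cardinal.mk ↥(P i) < α := by
      intro i
      induction i using Ordinal.induction with
      | _ i IH2 =>
        intro hi
        have hicard : i.card < δ := Cardinal.lt_ord.1 hi
        have h1 : Cardinal.mk ↥(⋃ i', ⋃ (_ : i' < i), P i') < α :=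
          mk_biUnion_lt_of hα0 (by rwa [← hδ]) (hicard.trans_le hδα)
            (fun i' hi' => IH2 i' hi' (hi'.trans hi))
        have h2 : Cardinal.mk ↥((⋃ i', ⋃ (_ : i' < i), P i') ∪ AAU i) < α :=
          lt_of_le_of_lt (Cardinal.mk_union_le _ _)
            (Cardinal.add_lt_of_lt hα0 h1 (hAAUcard i hi))
        exact lt_of_le_of_lt (hPspec i).2.2 (Cardinal.add_lt_of_lt hα0 h2 hsmall)
    -- `A` is contained in the union of the chain
    have hAUnion : A ⊆ ⋃ j' < δ.ord, P j' := by
      intro u hu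
      obtain ⟨i, hi, hmem⟩ := hcover ⟨u, hu⟩
      exact Set.mem_iUnion₂.2 ⟨i, hi, hAAUP i hmem⟩
    -- apply the induction hypothesis to each member of the chain
    have hIH : ∀ i : Ordinal.{u}, ∀ _ : i < δ.ord,
        ∃ M : Set U, le M N ∧ Cardinal.mk ↥M < max θ α ∧
          ∀ b ∈ N, ∃ M₀ ∈ K, M₀ ⊆ M ∧ nf M₀ {b} (P i) := by
      intro i hi
      obtain ⟨M, h1, h2, h3⟩ := IH (Cardinal.mk ↥(P i)) (hPcard i hi) (P i) le_rfl N hN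
      refine ⟨M, h1, h2.trans_le (max_le_max le_rfl ?_), h3⟩
      exact Order.succ_le_of_lt (hPcard i hi)
    choose MM hMM1 hMM2 hMM3 using hIH
    -- the final model
    set μ : Cardinal.{u} := max θ (Order.succ α) with hμdef
    have hμreg : μ.IsRegular := by
      rcases max_cases θ (Order.succ α) with ⟨h, _⟩ | ⟨h, _⟩
      · rw [hμdef, h]; exact hθ
      · rw [hμdef, h]; exact Cardinal.isRegular_succ hα0
    have hαμ : α < μ := lt_of_lt_of_le (Order.lt_succ α) (le_max_right _ _)
    have hθμ : θ ≤ μ := le_max_left _ _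
    set MM' : Ordinal.{u} → Set U := fun j => ⋃ (hj : j < δ.ord), MM j hj with hMM'
    have hMM'eq : ∀ j (hj : j < δ.ord), MM' j = MM j hj := fun j hj =>
      Set.Subset.antisymm (Set.iUnion_subset fun _ => subset_rfl)
        (Set.subset_iUnion (fun h : j < δ.ord => MM j h) hj)
    set B : Set U := ⋃ j, ⋃ (_ : j < δ.ord), MM' j with hB
    have hBN : B ⊆ N := Set.iUnion_subset fun j => Set.iUnion_subset fun hj =>
      (hMM'eq j hj).symm ▸ (hle _ _ (hMM1 j hj)).2.2
    obtain ⟨M, hBM, hMN, hMcard⟩ := hclosure N hN B hBN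
    have hBcard : Cardinal.mk ↥B < μ := by
      refine mk_biUnion_lt_of hμreg.1 ?_ ?_ ?_
      · rw [Cardinal.card_ord, hμreg.cof_eq]
        exact lt_of_le_of_lt hδα hαμ
      · rw [Cardinal.card_ord]
        exact lt_of_le_of_lt hδα hαμ
      · intro j hj
        rw [hMM'eq j hj]
        exact lt_of_lt_of_le (hMM2 j hj) (max_le hθμ hαμ.le)
    have hMμ : Cardinal.mk ↥M < μ :=
      lt_of_le_of_lt hMcard (Cardinal.add_lt_of_lt hμreg.1 hBcard
        (lt_of_lt_of_le hth_lam hθμ))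
    refine ⟨M, hMN, hMμ, fun b hb => ?_⟩
    -- chain local character for `b`
    obtain ⟨j, hj, hnfj⟩ := hchain δ hδreg P (fun j _ => hPK j)
      (fun i j hij _ => hPle i j hij) b
    obtain ⟨M₀, hM₀K, hM₀sub, hM₀nf⟩ := hMM3 j hj b hb
    have hnf1 : nf M₀ {b} (⋃ j' < δ.ord, P j') :=
      htrans M₀ hM₀K (P j) (hPK j) {b} _ hM₀nf hnfj
    have hnf2 : nf M₀ {b} A := hrmono M₀ hM₀K {b} _ A hnf1 hAUnion
    refine ⟨M₀, hM₀K, ?_, hnf2⟩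
    refine subset_trans hM₀sub (subset_trans ?_ hBM)
    refine subset_trans ?_ (Set.subset_iUnion₂ (s := fun j (_ : j < δ.ord) => MM' j) j hj)
    rw [hMM'eq j hj]

/-- Lemma `local-character-finite`: from chain local character for singletons and
set local character at `lam0`, every set `A` of size `≤ α` is, over some `M ≤ N` of
size `< max(θ, α⁺)`, `⫫*`-independent from every singleton of `N`. -/
theorem stmt_6 {U : Type u} (K : Set (Set U)) (nf : Set U → Set U → Set U → Prop)
    (le : Set U → Set U → Prop)
    (hle : ∀ M P : Set U, le M P → M ∈ K ∧ P ∈ K ∧ M ⊆ P)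
    (hcoh : ∀ M₀ M₁ P : Set U, M₀ ⊆ M₁ → le M₀ P → le M₁ P → le M₀ M₁)
    (huniv : (Set.univ : Set U) ∈ K)
    (hlmono : ∀ M ∈ K, ∀ A A₀ B : Set U, nf M A B → A₀ ⊆ A → nf M A₀ B)
    (hrmono : ∀ M ∈ K, ∀ A B B₀ : Set U, nf M A B → B₀ ⊆ B → nf M A B₀)
    (hsym : ∀ M ∈ K, ∀ A B : Set U, nf M A B → nf M B A)
    (htrans : ∀ M₀ ∈ K, ∀ M₁ ∈ K, ∀ A B : Set U, nf M₀ A M₁ → nf M₁ A B → nf M₀ A B)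
    (lam0 : Cardinal.{u}) (hlam0 : Cardinal.aleph0 ≤ lam0)
    (hclosure : ∀ P ∈ K, ∀ B : Set U, B ⊆ P →
      ∃ M : Set U, B ⊆ M ∧ le M P ∧ Cardinal.mk ↥M ≤ Cardinal.mk ↥B + lam0)
    (hchain : ∀ δ : Cardinal.{u}, δ.IsRegular →
      ∀ P : Ordinal.{u} → Set U, (∀ j < δ.ord, P j ∈ K) →
        (∀ i j : Ordinal.{u}, i < j → j < δ.ord → le (P i) (P j)) →
        ∀ a : U, ∃ j < δ.ord, nf (P j) {a} (⋃ j' < δ.ord, P j'))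
    (θ : Cardinal.{u}) (hθ : θ.IsRegular) (hth_lam : lam0 < θ)
    (hset : ∀ P ∈ K, ∀ A : Set U, Cardinal.mk ↥A ≤ lam0 →
      ∃ M : Set U, le M P ∧ Cardinal.mk ↥M < θ ∧ nf M A P) :
    ∀ α : Cardinal.{u}, ∀ A : Set U, Cardinal.mk ↥A ≤ α → ∀ N ∈ K,
      ∃ M : Set U, le M N ∧ Cardinal.mk ↥M < max θ (Order.succ α) ∧
        ∀ b ∈ N, nfm K nf A M {b} := by
  intro α A hA N hN
  obtain ⟨M, hMN, hMcard, hM⟩ := stmt_6_main K nf le hle hcoh huniv hrmono hsym htrans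
    lam0 hlam0 hclosure hchain θ hθ hth_lam hset α A hA N hN
  refine ⟨M, hMN, hMcard, fun b hb => ?_⟩
  obtain ⟨M₀, hM₀K, hM₀M, hM₀nf⟩ := hM b hb
  exact ⟨M₀, hM₀K, hM₀M, hsym M₀ hM₀K {b} A hM₀nf⟩
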